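/- Let N ≥ 2 be an integer, M a nonzero integer, q, p ∈ ℂ with 0 < |q| < 1, 0 < |p| < 1, p^{1/2} a fixed square root of p, and c ∈ ℂ satisfying (−p^{1/2})^{NM} = q^{−c−N} (with q^{−c−N} = exp(−(c+N) log q) for a fixed branch). Define F(M,x) = ∏_{k=0}^{NM−1} F((−p^{1/2})^k x) if M > 0 and F(M,x) = ∏_{k=1}^{N|M|} F((−p^{1/2})^{−k} x)^{−1} if M < 0, where F(x) = q^{2−2/N} Θ_{q^{2N}}(x²)Θ_{q^{2N}}(x^{−2}) / (Θ_{q^{2N}}(q²x²)Θ_{q^{2N}}(q²x^{−2})). Then for all x where both sides are defined: F(M, q^{c} x) / F(M, −p^{1/2} x) = 𝒴_{N,p,q,M}(x), where 𝒴_{N,p,q,M}(x) = ∏_{k=1}^{S} [ Θ_{q^{2N}}(x² p^{−k})² Θ_{q^{2N}}(x² q² p^{k}) Θ_{q^{2N}}(x² q^{−2} p^{k}) ] / [ Θ_{q^{2N}}(x² p^{k})² Θ_{q^{2N}}(x² q² p^{−k}) Θ_{q^{2N}}(x² q^{−2} p^{−k}) ], with S = NM for M > 0 and S = N|M| − 1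 for M < 0. -/

import Mathlib

open Complex Filter Topology

/-- The infinite `q`-Pochhammer product `(z;p)_∞ = ∏_{n≥0} (1 − z pⁿ)`. -/
noncomputable def qPoch (z p : ℂ) : ℂ := ∏' n : ℕ, (1 - z * p ^ n)

/-- The Jacobi theta function `Θ_p(z) = (z;p)_∞ (p z⁻¹;p)_∞ (p;p)_∞`. -/
noncomputable def jTheta (p z : ℂ) : ℂ := qPoch z p * qPoch (p * z⁻¹) p * qPoch p p

/-- The quasi-periodicity factor of the gauge-transformed elliptic `sl(N)` R-matrix:
`F(x) = q^{2−2/N} Θ_{q^{2N}}(x²)Θ_{q^{2N}}(x⁻²)/(Θ_{q^{2N}}(q²x²)Θ_{q^{2N}}(q²x⁻²))`,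
where `qpow` is a fixed determination of `q^{2−2/N}`. -/
noncomputable def Ffun (N : ℕ) (q qpow : ℂ) (x : ℂ) : ℂ :=
  qpow * jTheta (q ^ (2 * N)) (x ^ 2) * jTheta (q ^ (2 * N)) (x⁻¹ ^ 2)
    / (jTheta (q ^ (2 * N)) (q ^ 2 * x ^ 2) * jTheta (q ^ (2 * N)) (q ^ 2 * x⁻¹ ^ 2))

/-- The iterated quasi-periodicity factor:
`F(M,x) = ∏_{k=0}^{NM−1} F((−p^{1/2})^k x)` for `M > 0` and
`F(M,x) = ∏_{k=1}^{N|M|} F((−p^{1/2})^{−k} x)⁻¹` for `M < 0`. -/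
noncomputable def FMfun (N : ℕ) (M : ℤ) (q qpow sq : ℂ) (x : ℂ) : ℂ :=
  if 0 < M then ∏ k ∈ Finset.range (N * M.toNat), Ffun N q qpow ((-sq) ^ k * x)
  else ∏ k ∈ Finset.Icc 1 (N * (-M).toNat), (Ffun N q qpow ((-sq) ^ (-(k : ℤ)) * x))⁻¹

/-- The exchange structure function `𝒴_{N,p,q,M}(x)` of the trace operators `t(z)`:
`𝒴(x) = ∏_{k=1}^{S} Θ(x²p^{−k})²Θ(x²q²p^k)Θ(x²q^{−2}p^k) /
(Θ(x²p^k)²Θ(x²q²p^{−k})Θ(x²q^{−2}p^{−k}))` with `S = NM` for `M>0`, `S = N|M|−1` for `M<0`. -/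
noncomputable def Yfun (N : ℕ) (M : ℤ) (q p : ℂ) (x : ℂ) : ℂ :=
  ∏ k ∈ Finset.Icc 1 (if 0 < M then N * M.toNat else N * (-M).toNat - 1),
    jTheta (q ^ (2 * N)) (x ^ 2 * p ^ (-(k : ℤ))) ^ 2
      * jTheta (q ^ (2 * N)) (x ^ 2 * q ^ 2 * p ^ (k : ℤ))
      * jTheta (q ^ (2 * N)) (x ^ 2 * q ^ (-2 : ℤ) * p ^ (k : ℤ))
      / (jTheta (q ^ (2 * N)) (x ^ 2 * p ^ (k : ℤ)) ^ 2
        * jTheta (q ^ (2 * N)) (x ^ 2 * q ^ 2 * p ^ (-(k : ℤ)))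
        * jTheta (q ^ (2 * N)) (x ^ 2 * q ^ (-2 : ℤ) * p ^ (-(k : ℤ))))

lemma hasProd_zero_of_exists {f : ℕ → ℂ} (b : ℕ) (h : f b = 0) : HasProd f 0 := by
  have hev : ∀ᶠ s : Finset ℕ in atTop, ∏ i ∈ s, f i = 0 := by
    filter_upwards [Filter.eventually_ge_atTop ({b} : Finset ℕ)] with s hs
    exact Finset.prod_eq_zero (hs (Finset.mem_singleton_self b)) h
  exact Filter.Tendsto.congr' (by filter_upwards [hev] with s hs using hs.symm)
    tendsto_const_nhds

lemma multipliable_qPoch (z p : ℂ) (hp : ‖p‖ < 1) :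
    Multipliable (fun n : ℕ => 1 - z * p ^ n) := by
  by_cases h : ∃ n, 1 - z * p ^ n = 0
  · obtain ⟨n, hn⟩ := h
    exact ⟨0, hasProd_zero_of_exists n hn⟩
  · push_neg at h
    have hsum : Summable (fun n : ℕ => Complex.log (1 - z * p ^ n)) := by
      have hgeo : Summable (fun n : ℕ => (3/2 : ℝ) * (‖z‖ * ‖p‖ ^ n)) :=
        (((summable_geometric_of_lt_one (norm_nonneg p) hp).mul_left
          (‖z‖))).mul_left _
      apply Summable.of_norm_bounded_eventually_nat hgeo
      have htend : Tendsto (fun n : ℕ => ‖z‖ * ‖p‖ ^ n) atTop (𝓝 0) := by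
        simpa using (tendsto_pow_atTop_nhds_zero_of_lt_one (norm_nonneg p) hp).const_mul
          (‖z‖)
      filter_upwards [htend.eventually_le_const (by norm_num : (0:ℝ) < 1/2)] with n hn
      have h1 : ‖-(z * p ^ n)‖ ≤ 1/2 := by
        simpa [norm_mul, norm_pow] using hn
      have := Complex.norm_log_one_add_half_le_self h1
      have harg : (1 : ℂ) + -(z * p ^ n) = 1 - z * p ^ n := by ring
      rw [harg] at this
      refine this.trans ?_
      simp [norm_mul, norm_pow]
    exact Complex.multipliable_of_summable_log hsum

lemma qPoch_shift (z p : ℂ) (hp : ‖p‖ < 1) :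
    qPoch z p = (1 - z) * qPoch (z * p) p := by
  have h2 : (fun n : ℕ => 1 - z * p ^ (n + 1)) = fun n : ℕ => 1 - z * p * p ^ n := by
    funext n; rw [pow_succ]; ring
  have h1 : Multipliable (fun n : ℕ => 1 - z * p ^ (n + 1)) := by
    rw [h2]; exact multipliable_qPoch _ _ hp
  rw [qPoch, tprod_eq_zero_mul' (f := fun n : ℕ => 1 - z * p ^ n) h1]
  simp only [pow_zero, mul_one]
  congr 1
  rw [qPoch, ← h2]

lemma jTheta_inv (p z : ℂ) (hp : ‖p‖ < 1) (hz : z ≠ 0) :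
    jTheta p z⁻¹ = -z⁻¹ * jTheta p z := by
  rw [jTheta, jTheta, inv_inv, qPoch_shift z⁻¹ p hp, qPoch_shift z p hp,
    mul_comm z⁻¹ p, mul_comm z p]
  have hfac : (1 - z⁻¹) = -z⁻¹ * (1 - z) := by field_simp; ring
  rw [hfac]; ring

lemma jTheta_p_mul (p z : ℂ) (hp0 : p ≠ 0) (hp : ‖p‖ < 1) (hz : z ≠ 0) :
    jTheta p (p * z) = -z⁻¹ * jTheta p z := by
  have h1 : jTheta p (p * z) = jTheta p z⁻¹ := by
    rw [jTheta, jTheta, inv_inv, show p * (p * z)⁻¹ = z⁻¹ by field_simp]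
    ring
  rw [h1, jTheta_inv p z hp hz]

lemma jTheta_pinv_mul (p z : ℂ) (hp0 : p ≠ 0) (hp : ‖p‖ < 1) (hz : z ≠ 0) :
    jTheta p (p⁻¹ * z) = -(p⁻¹ * z) * jTheta p z := by
  have hu : p⁻¹ * z ≠ 0 := mul_ne_zero (inv_ne_zero hp0) hz
  have h := jTheta_p_mul p (p⁻¹ * z) hp0 hp hu
  rw [show p * (p⁻¹ * z) = z by field_simp] at h
  rw [h]
  field_simp

noncomputable def Gf (P q2 w : ℂ) : ℂ :=
  jTheta P w * jTheta P w⁻¹ / (jTheta P (q2 * w) * jTheta P (q2 * w⁻¹))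

lemma Gf_eq (P q2 w : ℂ) (hP : ‖P‖ < 1) (hq2 : q2 ≠ 0) (hw : w ≠ 0)
    (h1 : jTheta P (q2 * w) ≠ 0) (h2 : jTheta P (q2⁻¹ * w) ≠ 0) :
    Gf P q2 w = q2⁻¹ * jTheta P w ^ 2 / (jTheta P (q2 * w) * jTheta P (q2⁻¹ * w)) := by
  have hq2w : q2⁻¹ * w ≠ 0 := mul_ne_zero (inv_ne_zero hq2) hw
  rw [Gf, jTheta_inv P w hP hw, show q2 * w⁻¹ = (q2⁻¹ * w)⁻¹ by rw [mul_inv, inv_inv],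
    jTheta_inv P (q2⁻¹ * w) hP hq2w,
    div_eq_div_iff
      (mul_ne_zero h1 (mul_ne_zero (neg_ne_zero.mpr (inv_ne_zero hq2w)) h2))
      (mul_ne_zero h1 h2)]
  field_simp

lemma Gf_shift (P q2 w : ℂ) (hP0 : P ≠ 0) (hP : ‖P‖ < 1) (hq2 : q2 ≠ 0)
    (hw : w ≠ 0) (h1 : jTheta P (q2 * w) ≠ 0) (h2 : jTheta P (q2⁻¹ * w) ≠ 0) :
    Gf P q2 (P⁻¹ * w) = Gf P q2 w := by
  have hq2w : q2 * w ≠ 0 := mul_ne_zero hq2 hw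
  have hq2w' : q2⁻¹ * w ≠ 0 := mul_ne_zero (inv_ne_zero hq2) hw
  have h1' : jTheta P (q2 * (P⁻¹ * w)) ≠ 0 := by
    rw [show q2 * (P⁻¹ * w) = P⁻¹ * (q2 * w) by ring, jTheta_pinv_mul P (q2 * w) hP0 hP hq2w]
    exact mul_ne_zero (neg_ne_zero.mpr (mul_ne_zero (inv_ne_zero hP0) hq2w)) h1
  have h2' : jTheta P (q2⁻¹ * (P⁻¹ * w)) ≠ 0 := by
    rw [show q2⁻¹ * (P⁻¹ * w) = P⁻¹ * (q2⁻¹ * w) by ring,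
      jTheta_pinv_mul P (q2⁻¹ * w) hP0 hP hq2w']
    exact mul_ne_zero (neg_ne_zero.mpr (mul_ne_zero (inv_ne_zero hP0) hq2w')) h2
  rw [Gf_eq P q2 w hP hq2 hw h1 h2,
    Gf_eq P q2 (P⁻¹ * w) hP hq2 (mul_ne_zero (inv_ne_zero hP0) hw) h1' h2',
    show q2 * (P⁻¹ * w) = P⁻¹ * (q2 * w) by ring,
    show q2⁻¹ * (P⁻¹ * w) = P⁻¹ * (q2⁻¹ * w) by ring,
    jTheta_pinv_mul P w hP0 hP hw,
    jTheta_pinv_mul P (q2 * w) hP0 hP hq2w,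
    jTheta_pinv_mul P (q2⁻¹ * w) hP0 hP hq2w']
  rw [div_eq_div_iff
    (mul_ne_zero
      (mul_ne_zero (neg_ne_zero.mpr (mul_ne_zero (inv_ne_zero hP0) hq2w)) h1)
      (mul_ne_zero (neg_ne_zero.mpr (mul_ne_zero (inv_ne_zero hP0) hq2w')) h2))
    (mul_ne_zero h1 h2)]
  field_simp

lemma ratio_helper (u A B C D E F : ℂ) (hu : u ≠ 0) (hB : B ≠ 0) (hC : C ≠ 0)
    (hD : D ≠ 0) (hE : E ≠ 0) (hF : F ≠ 0) :
    (u * A ^ 2 / (B * C)) / (u * D ^ 2 / (E * F)) = A ^ 2 * E * F / (D ^ 2 * B * C) := by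
  field_simp

lemma key_ratio (q p x : ℂ) (N : ℕ) (hq : q ≠ 0) (hp : p ≠ 0) (hx : x ≠ 0)
    (hPlt : ‖q ^ (2 * N)‖ < 1)
    (hTh : ∀ a b : ℤ, jTheta (q ^ (2 * N)) (q ^ a * p ^ b * x ^ 2) ≠ 0) (k : ℕ) :
    Gf (q ^ (2 * N)) (q ^ 2) (p ^ (-(k : ℤ)) * x ^ 2)
      / Gf (q ^ (2 * N)) (q ^ 2) (p ^ (k : ℤ) * x ^ 2)
      = jTheta (q ^ (2 * N)) (x ^ 2 * p ^ (-(k : ℤ))) ^ 2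
          * jTheta (q ^ (2 * N)) (x ^ 2 * q ^ 2 * p ^ (k : ℤ))
          * jTheta (q ^ (2 * N)) (x ^ 2 * q ^ (-2 : ℤ) * p ^ (k : ℤ))
        / (jTheta (q ^ (2 * N)) (x ^ 2 * p ^ (k : ℤ)) ^ 2
          * jTheta (q ^ (2 * N)) (x ^ 2 * q ^ 2 * p ^ (-(k : ℤ)))
          * jTheta (q ^ (2 * N)) (x ^ 2 * q ^ (-2 : ℤ) * p ^ (-(k : ℤ)))) := by
  have hq2 : (q : ℂ) ^ 2 ≠ 0 := pow_ne_zero _ hq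
  have hw1 : p ^ (-(k : ℤ)) * x ^ 2 ≠ 0 := mul_ne_zero (zpow_ne_zero _ hp) (pow_ne_zero _ hx)
  have hw2 : p ^ (k : ℤ) * x ^ 2 ≠ 0 := mul_ne_zero (zpow_ne_zero _ hp) (pow_ne_zero _ hx)
  have ha : jTheta (q ^ (2 * N)) (x ^ 2 * p ^ (-(k : ℤ))) ≠ 0 := by
    rw [show x ^ 2 * p ^ (-(k : ℤ)) = q ^ (0 : ℤ) * p ^ (-(k : ℤ)) * x ^ 2 by
      simp only [zpow_zero]; ring]
    exact hTh 0 _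
  have hd : jTheta (q ^ (2 * N)) (x ^ 2 * p ^ (k : ℤ)) ≠ 0 := by
    rw [show x ^ 2 * p ^ (k : ℤ) = q ^ (0 : ℤ) * p ^ (k : ℤ) * x ^ 2 by
      simp only [zpow_zero]; ring]
    exact hTh 0 _
  have hb : jTheta (q ^ (2 * N)) (x ^ 2 * q ^ 2 * p ^ (-(k : ℤ))) ≠ 0 := by
    rw [show x ^ 2 * q ^ 2 * p ^ (-(k : ℤ)) = q ^ (2 : ℤ) * p ^ (-(k : ℤ)) * x ^ 2 by
      simp only [zpow_ofNat]; ring]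
    exact hTh 2 _
  have hc : jTheta (q ^ (2 * N)) (x ^ 2 * q ^ (-2 : ℤ) * p ^ (-(k : ℤ))) ≠ 0 := by
    rw [show x ^ 2 * q ^ (-2 : ℤ) * p ^ (-(k : ℤ)) = q ^ (-2 : ℤ) * p ^ (-(k : ℤ)) * x ^ 2 by ring]
    exact hTh (-2) _
  have he : jTheta (q ^ (2 * N)) (x ^ 2 * q ^ 2 * p ^ (k : ℤ)) ≠ 0 := by
    rw [show x ^ 2 * q ^ 2 * p ^ (k : ℤ) = q ^ (2 : ℤ) * p ^ (k : ℤ) * x ^ 2 by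
      simp only [zpow_ofNat]; ring]
    exact hTh 2 _
  have hf : jTheta (q ^ (2 * N)) (x ^ 2 * q ^ (-2 : ℤ) * p ^ (k : ℤ)) ≠ 0 := by
    rw [show x ^ 2 * q ^ (-2 : ℤ) * p ^ (k : ℤ) = q ^ (-2 : ℤ) * p ^ (k : ℤ) * x ^ 2 by ring]
    exact hTh (-2) _
  rw [Gf_eq _ _ _ hPlt hq2 hw1
      (by rw [show q ^ 2 * (p ^ (-(k : ℤ)) * x ^ 2) = x ^ 2 * q ^ 2 * p ^ (-(k : ℤ)) by ring]
          exact hb)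
      (by rw [show (q ^ 2)⁻¹ * (p ^ (-(k : ℤ)) * x ^ 2) = x ^ 2 * q ^ (-2 : ℤ) * p ^ (-(k : ℤ)) by
            simp only [zpow_neg, zpow_ofNat]; ring]
          exact hc),
    Gf_eq _ _ _ hPlt hq2 hw2
      (by rw [show q ^ 2 * (p ^ (k : ℤ) * x ^ 2) = x ^ 2 * q ^ 2 * p ^ (k : ℤ) by ring]
          exact he)
      (by rw [show (q ^ 2)⁻¹ * (p ^ (k : ℤ) * x ^ 2) = x ^ 2 * q ^ (-2 : ℤ) * p ^ (k : ℤ) by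
            simp only [zpow_neg, zpow_ofNat]; ring]
          exact hf)]
  rw [show q ^ 2 * (p ^ (-(k : ℤ)) * x ^ 2) = x ^ 2 * q ^ 2 * p ^ (-(k : ℤ)) by ring,
    show (q ^ 2)⁻¹ * (p ^ (-(k : ℤ)) * x ^ 2) = x ^ 2 * q ^ (-2 : ℤ) * p ^ (-(k : ℤ)) by
      simp only [zpow_neg, zpow_ofNat]; ring,
    show q ^ 2 * (p ^ (k : ℤ) * x ^ 2) = x ^ 2 * q ^ 2 * p ^ (k : ℤ) by ring,
    show (q ^ 2)⁻¹ * (p ^ (k : ℤ) * x ^ 2) = x ^ 2 * q ^ (-2 : ℤ) * p ^ (k : ℤ) by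
      simp only [zpow_neg, zpow_ofNat]; ring,
    show p ^ (-(k : ℤ)) * x ^ 2 = x ^ 2 * p ^ (-(k : ℤ)) by ring,
    show p ^ (k : ℤ) * x ^ 2 = x ^ 2 * p ^ (k : ℤ) by ring]
  exact ratio_helper _ _ _ _ _ _ _ (inv_ne_zero hq2) hb hc hd he hf

lemma Ffun_eq_Gf (N : ℕ) (q qpow y : ℂ) :
    Ffun N q qpow y = qpow * Gf (q ^ (2 * N)) (q ^ 2) (y ^ 2) := by
  rw [Ffun, Gf, inv_pow]; ring

lemma Gf_ne (q p x : ℂ) (N : ℕ) (hq : q ≠ 0) (hp : p ≠ 0) (hx : x ≠ 0)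
    (hPlt : ‖q ^ (2 * N)‖ < 1)
    (hTh : ∀ a b : ℤ, jTheta (q ^ (2 * N)) (q ^ a * p ^ b * x ^ 2) ≠ 0) (a : ℤ) :
    Gf (q ^ (2 * N)) (q ^ 2) (p ^ a * x ^ 2) ≠ 0 := by
  have hq2 : (q : ℂ) ^ 2 ≠ 0 := pow_ne_zero _ hq
  have hw : p ^ a * x ^ 2 ≠ 0 := mul_ne_zero (zpow_ne_zero _ hp) (pow_ne_zero _ hx)
  have h1 : jTheta (q ^ (2 * N)) (q ^ 2 * (p ^ a * x ^ 2)) ≠ 0 := by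
    rw [show q ^ 2 * (p ^ a * x ^ 2) = q ^ (2 : ℤ) * p ^ a * x ^ 2 by
      simp only [zpow_ofNat]; ring]
    exact hTh 2 a
  have h2 : jTheta (q ^ (2 * N)) ((q ^ 2)⁻¹ * (p ^ a * x ^ 2)) ≠ 0 := by
    rw [show (q ^ 2)⁻¹ * (p ^ a * x ^ 2) = q ^ (-2 : ℤ) * p ^ a * x ^ 2 by
      simp only [zpow_neg, zpow_ofNat]; ring]
    exact hTh (-2) a
  have h0 : jTheta (q ^ (2 * N)) (p ^ a * x ^ 2) ≠ 0 := by
    rw [show p ^ a * x ^ 2 = q ^ (0 : ℤ) * p ^ a * x ^ 2 by simp only [zpow_zero]; ring]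
    exact hTh 0 a
  rw [Gf_eq _ _ _ hPlt hq2 hw h1 h2]
  exact div_ne_zero (mul_ne_zero (inv_ne_zero hq2) (pow_ne_zero _ h0)) (mul_ne_zero h1 h2)

/-- On the surface `Σ_{N,M}`, i.e. when `(−p^{1/2})^{NM} = q^{−c−N}`, the ratio
`F(M, q^c x)/F(M, −p^{1/2} x)` equals the exchange function `𝒴_{N,p,q,M}(x)`. -/
theorem stmt11 (N : ℕ) (hN : 2 ≤ N) (M : ℤ) (hM : M ≠ 0) (q p sq qpow c lq : ℂ)
    (hq0 : 0 < ‖q‖) (hq1 : ‖q‖ < 1)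
    (hp0 : 0 < ‖p‖) (hp1 : ‖p‖ < 1)
    (hsq : sq ^ 2 = p) (hqpow : qpow ^ N = q ^ (2 * N - 2))
    (hlq : Complex.exp lq = q)
    (hsurf : (-sq) ^ ((N : ℤ) * M) = Complex.exp (-(c + (N : ℂ)) * lq))
    (x : ℂ) (hx : x ≠ 0)
    (hdef : ∀ a b : ℤ, jTheta (q ^ (2 * N)) (q ^ a * p ^ b * x ^ 2) ≠ 0
      ∧ jTheta (q ^ (2 * N)) (q ^ a * p ^ b * x⁻¹ ^ 2) ≠ 0) :
    FMfun N M q qpow sq (Complex.exp (c * lq) * x) / FMfun N M q qpow sq (-sq * x)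
      = Yfun N M q p x := by
  have hq : q ≠ 0 := by intro h; rw [h] at hq0; simp at hq0
  have hp' : p ≠ 0 := by intro h; rw [h] at hp0; simp at hp0
  have hsq0 : sq ≠ 0 := by intro h; rw [h] at hsq; rw [← hsq] at hp'; simp at hp'
  have hq2 : (q : ℂ) ^ 2 ≠ 0 := pow_ne_zero _ hq
  have hNne : N ≠ 0 := by omega
  have hP0 : q ^ (2 * N) ≠ 0 := pow_ne_zero _ hq
  have hPlt : ‖q ^ (2 * N)‖ < 1 := by
    rw [norm_pow]; exact pow_lt_one₀ (norm_nonneg q) hq1 (by omega)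
  have hqpow0 : qpow ≠ 0 := by
    intro h; rw [h, zero_pow hNne] at hqpow
    exact (pow_ne_zero (2 * N - 2) hq) hqpow.symm
  have hTh : ∀ a b : ℤ, jTheta (q ^ (2 * N)) (q ^ a * p ^ b * x ^ 2) ≠ 0 :=
    fun a b => (hdef a b).1
  have hsqpow : ∀ a : ℤ, ((-sq) ^ a) ^ 2 = p ^ a := fun a => by
    rw [← zpow_natCast ((-sq) ^ a) 2, ← zpow_mul, show a * ((2 : ℕ) : ℤ) = 2 * a by
        push_cast; ring,
      zpow_mul, show ((-sq) : ℂ) ^ (2 : ℤ) = p by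
        rw [show (2 : ℤ) = ((2 : ℕ) : ℤ) from rfl, zpow_natCast, neg_pow]; simp [hsq]]
  have hE : Complex.exp (c * lq) * ((-sq) ^ ((N : ℤ) * M) * q ^ N) = 1 := by
    rw [hsurf, ← hlq, ← Complex.exp_nat_mul, ← Complex.exp_add, ← Complex.exp_add,
      show c * lq + (-(c + (N : ℂ)) * lq + (N : ℂ) * lq) = 0 by ring, Complex.exp_zero]
  have hE2 : Complex.exp (c * lq) ^ 2 * (p ^ ((N : ℤ) * M) * q ^ (2 * N)) = 1 := by
    have h2 : ((q : ℂ) ^ N) ^ 2 = q ^ (2 * N) := by rw [← pow_mul, Nat.mul_comm]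
    calc Complex.exp (c * lq) ^ 2 * (p ^ ((N : ℤ) * M) * q ^ (2 * N))
        = (Complex.exp (c * lq) * ((-sq) ^ ((N : ℤ) * M) * q ^ N)) ^ 2 := by
          rw [mul_pow, mul_pow, hsqpow, h2]
      _ = 1 := by rw [hE, one_pow]
  have hE2' : Complex.exp (c * lq) ^ 2 = (p ^ ((N : ℤ) * M))⁻¹ * (q ^ (2 * N))⁻¹ := by
    have hne : p ^ ((N : ℤ) * M) ≠ 0 := zpow_ne_zero _ hp'
    field_simp
    linear_combination hE2
  have hshift : ∀ e : ℤ, Gf (q ^ (2 * N)) (q ^ 2) ((q ^ (2 * N))⁻¹ * (p ^ e * x ^ 2))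
      = Gf (q ^ (2 * N)) (q ^ 2) (p ^ e * x ^ 2) := by
    intro e
    refine Gf_shift _ _ _ hP0 hPlt hq2
      (mul_ne_zero (zpow_ne_zero _ hp') (pow_ne_zero _ hx)) ?_ ?_
    · rw [show q ^ 2 * (p ^ e * x ^ 2) = q ^ (2 : ℤ) * p ^ e * x ^ 2 by
        simp only [zpow_ofNat]; ring]
      exact hTh 2 e
    · rw [show (q ^ 2)⁻¹ * (p ^ e * x ^ 2) = q ^ (-2 : ℤ) * p ^ e * x ^ 2 by
        simp only [zpow_neg, zpow_ofNat]; ring]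
      exact hTh (-2) e
  rcases hM.lt_or_gt with hMneg | hMpos
  · -- M < 0
    have hMnn : (0 : ℤ) ≤ -M := by omega
    have hLM : ((N : ℤ)) * M = -((N * (-M).toNat : ℕ) : ℤ) := by
      push_cast [Int.toNat_of_nonneg hMnn]; ring
    have hLpos : 0 < N * (-M).toNat := by
      have h1 : 0 < (-M).toNat := by omega
      exact Nat.mul_pos (by omega) h1
    simp only [FMfun, Yfun, if_neg (not_lt.mpr hMneg.le)]
    have hnum : ∀ k ∈ Finset.Icc 1 (N * (-M).toNat),
        (Ffun N q qpow ((-sq) ^ (-(k : ℤ)) * (Complex.exp (c * lq) * x)))⁻¹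
        = (qpow * Gf (q ^ (2 * N)) (q ^ 2)
            (p ^ (((N * (-M).toNat : ℕ) : ℤ) - (k : ℤ)) * x ^ 2))⁻¹ := by
      intro k _
      congr 1
      rw [Ffun_eq_Gf]
      congr 1
      have harg : ((-sq) ^ (-(k : ℤ)) * (Complex.exp (c * lq) * x)) ^ 2
          = (q ^ (2 * N))⁻¹ * (p ^ (((N * (-M).toNat : ℕ) : ℤ) - (k : ℤ)) * x ^ 2) := by
        have hzp : p ^ (-(k : ℤ)) * (p ^ (-((N * (-M).toNat : ℕ) : ℤ)))⁻¹
            = p ^ (((N * (-M).toNat : ℕ) : ℤ) - (k : ℤ)) := by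
          rw [← zpow_neg, neg_neg, ← zpow_add₀ hp']
          congr 1; ring
        rw [mul_pow, mul_pow, hE2', hLM, hsqpow (-(k : ℤ)), ← hzp]; ring
      rw [harg, hshift]
    have hden : ∀ k ∈ Finset.Icc 1 (N * (-M).toNat),
        (Ffun N q qpow ((-sq) ^ (-(k : ℤ)) * (-sq * x)))⁻¹
        = (qpow * Gf (q ^ (2 * N)) (q ^ 2) (p ^ (1 - (k : ℤ)) * x ^ 2))⁻¹ := by
      intro k _
      congr 1
      rw [Ffun_eq_Gf]
      congr 2
      have hzp : p ^ (-(k : ℤ)) * p = p ^ (1 - (k : ℤ)) := by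
        rw [show (1 : ℤ) - (k : ℤ) = -(k : ℤ) + 1 by ring, zpow_add₀ hp', zpow_one]
      rw [mul_pow, mul_pow, hsqpow (-(k : ℤ)),
        show ((-sq) : ℂ) ^ 2 = p by rw [neg_pow]; simp [hsq], ← hzp]
      ring
    rw [Finset.prod_congr rfl hnum, Finset.prod_congr rfl hden]
    simp only [mul_inv]
    rw [Finset.prod_mul_distrib, Finset.prod_mul_distrib, Finset.prod_const, Nat.card_Icc,
      Nat.add_sub_cancel]
    rw [mul_div_mul_left _ _ (pow_ne_zero _ (inv_ne_zero hqpow0))]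
    have hre1 : (∏ k ∈ Finset.Icc 1 (N * (-M).toNat),
        (Gf (q ^ (2 * N)) (q ^ 2) (p ^ (((N * (-M).toNat : ℕ) : ℤ) - (k : ℤ)) * x ^ 2))⁻¹)
        = ∏ j ∈ Finset.range (N * (-M).toNat),
          (Gf (q ^ (2 * N)) (q ^ 2) (p ^ (j : ℤ) * x ^ 2))⁻¹ := by
      refine Finset.prod_nbij' (fun k => N * (-M).toNat - k) (fun j => N * (-M).toNat - j)
        ?_ ?_ ?_ ?_ ?_
      · intro a ha; simp only [Finset.mem_Icc] at ha; simp only [Finset.mem_range]; omega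
      · intro a ha; simp only [Finset.mem_range] at ha; simp only [Finset.mem_Icc]; omega
      · intro a ha; simp only [Finset.mem_Icc] at ha; omega
      · intro a ha; simp only [Finset.mem_range] at ha; omega
      · intro a ha
        simp only [Finset.mem_Icc] at ha
        rw [show (((N * (-M).toNat : ℕ) : ℤ) - (a : ℤ))
          = (((N * (-M).toNat - a : ℕ)) : ℤ) by omega]
    have hre2 : (∏ k ∈ Finset.Icc 1 (N * (-M).toNat),
        (Gf (q ^ (2 * N)) (q ^ 2) (p ^ (1 - (k : ℤ)) * x ^ 2))⁻¹)
        = ∏ j ∈ Finset.range (N * (-M).toNat),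
          (Gf (q ^ (2 * N)) (q ^ 2) (p ^ (-(j : ℤ)) * x ^ 2))⁻¹ := by
      refine Finset.prod_nbij' (fun k => k - 1) (fun j => j + 1) ?_ ?_ ?_ ?_ ?_
      · intro a ha; simp only [Finset.mem_Icc] at ha; simp only [Finset.mem_range]; omega
      · intro a ha; simp only [Finset.mem_range] at ha; simp only [Finset.mem_Icc]; omega
      · intro a ha; simp only [Finset.mem_Icc] at ha; omega
      · intro a ha; simp only [Finset.mem_range] at ha; omega
      · intro a ha
        simp only [Finset.mem_Icc] at ha
        rw [show ((1 : ℤ) - (a : ℤ)) = -(((a - 1 : ℕ)) : ℤ) by omega]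
    rw [hre1, hre2, ← Finset.prod_div_distrib]
    have hterm : ∀ j ∈ Finset.range (N * (-M).toNat),
        (Gf (q ^ (2 * N)) (q ^ 2) (p ^ (j : ℤ) * x ^ 2))⁻¹
          / (Gf (q ^ (2 * N)) (q ^ 2) (p ^ (-(j : ℤ)) * x ^ 2))⁻¹
        = Gf (q ^ (2 * N)) (q ^ 2) (p ^ (-(j : ℤ)) * x ^ 2)
          / Gf (q ^ (2 * N)) (q ^ 2) (p ^ (j : ℤ) * x ^ 2) := by
      intro j _; rw [inv_div_inv]
    rw [Finset.prod_congr rfl hterm]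
    have hsplit : Finset.range (N * (-M).toNat)
        = insert 0 (Finset.Icc 1 (N * (-M).toNat - 1)) := by
      ext a; simp only [Finset.mem_range, Finset.mem_insert, Finset.mem_Icc]; omega
    rw [hsplit, Finset.prod_insert (by simp)]
    rw [show (Gf (q ^ (2 * N)) (q ^ 2) (p ^ (-((0 : ℕ) : ℤ)) * x ^ 2)
        / Gf (q ^ (2 * N)) (q ^ 2) (p ^ ((0 : ℕ) : ℤ) * x ^ 2)) = 1 by
      rw [show (-((0 : ℕ) : ℤ)) = ((0 : ℕ) : ℤ) by simp]
      exact div_self (Gf_ne q p x N hq hp' hx hPlt hTh _), one_mul]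
    exact Finset.prod_congr rfl (fun k _ => key_ratio q p x N hq hp' hx hPlt hTh k)
  · -- M > 0
    have hLM : ((N : ℤ)) * M = ((N * M.toNat : ℕ) : ℤ) := by
      push_cast [Int.toNat_of_nonneg hMpos.le]; ring
    simp only [FMfun, Yfun, if_pos hMpos]
    have hnum : ∀ k ∈ Finset.range (N * M.toNat),
        Ffun N q qpow ((-sq) ^ k * (Complex.exp (c * lq) * x))
        = qpow * Gf (q ^ (2 * N)) (q ^ 2)
            (p ^ ((k : ℤ) - ((N * M.toNat : ℕ) : ℤ)) * x ^ 2) := by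
      intro k _
      rw [Ffun_eq_Gf]
      congr 1
      have harg : ((-sq) ^ k * (Complex.exp (c * lq) * x)) ^ 2
          = (q ^ (2 * N))⁻¹ * (p ^ ((k : ℤ) - ((N * M.toNat : ℕ) : ℤ)) * x ^ 2) := by
        have hk2 : (((-sq) : ℂ) ^ k) ^ 2 = p ^ (k : ℤ) := by
          rw [← zpow_natCast (-sq) k]; exact hsqpow k
        have hzp : p ^ (k : ℤ) * (p ^ (((N * M.toNat : ℕ) : ℤ)))⁻¹
            = p ^ ((k : ℤ) - ((N * M.toNat : ℕ) : ℤ)) := by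
          rw [← zpow_neg, ← zpow_add₀ hp', sub_eq_add_neg]
        rw [mul_pow, mul_pow, hE2', hLM, hk2, ← hzp]; ring
      rw [harg, hshift]
    have hden : ∀ k ∈ Finset.range (N * M.toNat),
        Ffun N q qpow ((-sq) ^ k * (-sq * x))
        = qpow * Gf (q ^ (2 * N)) (q ^ 2) (p ^ ((k : ℤ) + 1) * x ^ 2) := by
      intro k _
      rw [Ffun_eq_Gf]
      congr 2
      have hk2 : (((-sq) : ℂ) ^ (k + 1)) ^ 2 = p ^ ((k : ℤ) + 1) := by
        rw [← zpow_natCast (-sq) (k + 1)]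
        rw [show (((k + 1 : ℕ)) : ℤ) = (k : ℤ) + 1 by push_cast; ring] at *
        exact hsqpow ((k : ℤ) + 1)
      calc ((-sq) ^ k * (-sq * x)) ^ 2 = ((-sq) ^ (k + 1)) ^ 2 * x ^ 2 := by
            rw [pow_succ]; ring
        _ = p ^ ((k : ℤ) + 1) * x ^ 2 := by rw [hk2]
    rw [Finset.prod_congr rfl hnum, Finset.prod_congr rfl hden,
      Finset.prod_mul_distrib, Finset.prod_mul_distrib, Finset.prod_const, Finset.card_range]
    rw [mul_div_mul_left _ _ (pow_ne_zero _ hqpow0)]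
    have hre1 : (∏ k ∈ Finset.range (N * M.toNat),
        Gf (q ^ (2 * N)) (q ^ 2) (p ^ ((k : ℤ) - ((N * M.toNat : ℕ) : ℤ)) * x ^ 2))
        = ∏ j ∈ Finset.Icc 1 (N * M.toNat),
          Gf (q ^ (2 * N)) (q ^ 2) (p ^ (-(j : ℤ)) * x ^ 2) := by
      refine Finset.prod_nbij' (fun k => N * M.toNat - k) (fun j => N * M.toNat - j)
        ?_ ?_ ?_ ?_ ?_
      · intro a ha; simp only [Finset.mem_range] at ha; simp only [Finset.mem_Icc]; omega
      · intro a ha; simp only [Finset.mem_Icc] at ha; simp only [Finset.mem_range]; omega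
      · intro a ha; simp only [Finset.mem_range] at ha; omega
      · intro a ha; simp only [Finset.mem_Icc] at ha; omega
      · intro a ha
        simp only [Finset.mem_range] at ha
        rw [show ((a : ℤ) - ((N * M.toNat : ℕ) : ℤ)) = -(((N * M.toNat - a : ℕ)) : ℤ) by omega]
    have hre2 : (∏ k ∈ Finset.range (N * M.toNat),
        Gf (q ^ (2 * N)) (q ^ 2) (p ^ ((k : ℤ) + 1) * x ^ 2))
        = ∏ j ∈ Finset.Icc 1 (N * M.toNat),
          Gf (q ^ (2 * N)) (q ^ 2) (p ^ (j : ℤ) * x ^ 2) := by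
      refine Finset.prod_nbij' (fun k => k + 1) (fun j => j - 1) ?_ ?_ ?_ ?_ ?_
      · intro a ha; simp only [Finset.mem_range] at ha; simp only [Finset.mem_Icc]; omega
      · intro a ha; simp only [Finset.mem_Icc] at ha; simp only [Finset.mem_range]; omega
      · intro a ha; simp only [Finset.mem_range] at ha; omega
      · intro a ha; simp only [Finset.mem_Icc] at ha; omega
      · intro a ha
        rw [show ((a : ℤ) + 1) = (((a + 1 : ℕ)) : ℤ) by omega]
    rw [hre1, hre2, ← Finset.prod_div_distrib]
    exact Finset.prod_congr rfl (fun k _ => key_ratio q p x N hq hp' hx hPlt hTh k)
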